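/- Let a, s, t be rational numbers with s ≠ 0, t ≠ 0, at⁴ − 2s⁴ ≠ 0, 4at⁴ + s⁴ ≠ 0, and 2a²t⁸ + 10as⁴t⁴ − s⁸ ≠ 0. Define x = 6ast³(at⁴ − 2s⁴)² / ((4at⁴ + s⁴)(2a²t⁸ + 10as⁴t⁴ − s⁸)), y = (3/2)·s⁵(4at⁴ + s⁴)² / (t(at⁴ − 2s⁴)(2a²t⁸ + 10as⁴t⁴ − s⁸)), and z = (2/3)·(2a²t⁸ + 10as⁴t⁴ − s⁸) / (s³t(4at⁴ + s⁴)). Then xyz(x + y + z) = a. -/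

import Mathlib

theorem stmt_0 (a s t : ℚ) (hs : s ≠ 0) (ht : t ≠ 0)
    (h1 : a * t ^ 4 - 2 * s ^ 4 ≠ 0)
    (h2 : 4 * a * t ^ 4 + s ^ 4 ≠ 0)
    (h3 : 2 * a ^ 2 * t ^ 8 + 10 * a * s ^ 4 * t ^ 4 - s ^ 8 ≠ 0)
    (x y z : ℚ)
    (hx : x = 6 * a * s * t ^ 3 * (a * t ^ 4 - 2 * s ^ 4) ^ 2 /
      ((4 * a * t ^ 4 + s ^ 4) * (2 * a ^ 2 * t ^ 8 + 10 * a * s ^ 4 * t ^ 4 - s ^ 8)))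
    (hy : y = 3 / 2 * (s ^ 5 * (4 * a * t ^ 4 + s ^ 4) ^ 2) /
      (t * (a * t ^ 4 - 2 * s ^ 4) * (2 * a ^ 2 * t ^ 8 + 10 * a * s ^ 4 * t ^ 4 - s ^ 8)))
    (hz : z = 2 / 3 * (2 * a ^ 2 * t ^ 8 + 10 * a * s ^ 4 * t ^ 4 - s ^ 8) /
      (s ^ 3 * t * (4 * a * t ^ 4 + s ^ 4))) :
    x * y * z * (x + y + z) = a := by
  subst hx hy hz
  have h1' : a * t ^ 4 - s ^ 4 * 2 ≠ 0 := by rwa [mul_comm (s ^ 4)]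
  have h2' : a * t ^ 4 * 4 + s ^ 4 ≠ 0 := by convert h2 using 1; ring
  have h3' : a * t ^ 4 * (a * t ^ 4 * 2 + s ^ 4 * 10) - s ^ 8 ≠ 0 := by convert h3 using 1; ring
  field_simp
  ring
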